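/- Let n ≥ 1, let r ≥ 0, θ ≥ 0, L ≥ 0 be real constants, let α ∈ ℝ, γ ∈ ℝⁿ, and let f : ℝ × ℝⁿ → ℝ satisfy the quadratic-Lipschitz estimate with data (α, γ, r, θ), i.e. for all y₁, y₂ ∈ ℝ and z₁, z₂ ∈ ℝⁿ: |f(y₁,z₁) − f(y₂,z₂) − α(y₁−y₂) − ⟨γ, z₁−z₂⟩| ≤ (r|y₁−y₂| + θ‖z₁−z₂‖)·(r(|y₁|+|y₂|) + θ(‖z₁‖+‖z₂‖)). Let a ∈ ℝ with |a| ≤ L, and define f̄ : ℝ × ℝⁿ → ℝ by f̄(ȳ, z̄) := e^{a}·(f(e^{−a}ȳ, e^{−a}z̄) − f(0,0)) − α·ȳ − ⟨γ, z̄⟩. Then f̄ satisfies the quadratic-Lipschitz estimate with data (0, 0, r̄, θ̄), where r̄ = r·e^{L} and θ̄ = θ·e^{L}; that is, for all ȳ₁, ȳ₂ ∈ ℝ and z̄₁, z̄₂ ∈ ℝⁿ: |f̄(ȳ₁,z̄₁) − f̄(ȳ₂,z̄₂)| ≤ (r̄|ȳ₁−ȳ₂| + θ̄‖z̄₁−z̄₂‖)·(r̄(|ȳ₁|+|ȳ₂|)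 + θ̄(‖z̄₁‖+‖z̄₂‖)). -/
import Mathlib


open scoped RealInnerProductSpace

/-- first assertion of Lemma 1 of the paper.
If `f : ℝ × ℝⁿ → ℝ` satisfies the quadratic-Lipschitz estimate of condition A) with data
`(α, γ, r, θ)`, and `|a| ≤ L`, then the rescaled generator
`f̄(ȳ,z̄) = eᵃ·(f(e⁻ᵃȳ, e⁻ᵃz̄) − f(0,0)) − α·ȳ − ⟨γ, z̄⟩`
satisfies the estimate with data `(0, 0, r·e^L, θ·e^L)`. -/
theorem stmt_3 (n : ℕ) (hn : 1 ≤ n) (r θ L : ℝ) (hr : 0 ≤ r) (hθ : 0 ≤ θ) (hL : 0 ≤ L)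
    (α : ℝ) (γ : EuclideanSpace ℝ (Fin n))
    (f : ℝ → EuclideanSpace ℝ (Fin n) → ℝ)
    (hf : ∀ (y₁ y₂ : ℝ) (z₁ z₂ : EuclideanSpace ℝ (Fin n)),
      |f y₁ z₁ - f y₂ z₂ - α * (y₁ - y₂) - ⟪γ, z₁ - z₂⟫| ≤
        (r * |y₁ - y₂| + θ * ‖z₁ - z₂‖) * (r * (|y₁| + |y₂|) + θ * (‖z₁‖ + ‖z₂‖)))
    (a : ℝ) (ha : |a| ≤ L)
    (fbar : ℝ → EuclideanSpace ℝ (Fin n) → ℝ)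
    (hfbar : ∀ (ybar : ℝ) (zbar : EuclideanSpace ℝ (Fin n)),
      fbar ybar zbar =
        Real.exp a * (f (Real.exp (-a) * ybar) (Real.exp (-a) • zbar) - f 0 0)
          - α * ybar - ⟪γ, zbar⟫) :
    ∀ (ybar₁ ybar₂ : ℝ) (zbar₁ zbar₂ : EuclideanSpace ℝ (Fin n)),
      |fbar ybar₁ zbar₁ - fbar ybar₂ zbar₂| ≤
        ((r * Real.exp L) * |ybar₁ - ybar₂| + (θ * Real.exp L) * ‖zbar₁ - zbar₂‖) *
          ((r * Real.exp L) * (|ybar₁| + |ybar₂|) +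
            (θ * Real.exp L) * (‖zbar₁‖ + ‖zbar₂‖)) := by
  intro y₁ y₂ z₁ z₂
  set e := Real.exp a with he
  set b := Real.exp (-a) with hb
  have hbpos : (0:ℝ) < b := Real.exp_pos _
  have hepos : (0:ℝ) < e := Real.exp_pos _
  have h1 : e * b = 1 := by rw [he, hb, ← Real.exp_add]; simp
  set u₁ := b * y₁
  set u₂ := b * y₂
  set v₁ := b • z₁
  set v₂ := b • z₂
  have hinner : ⟪γ, v₁ - v₂⟫ = b * ⟪γ, z₁ - z₂⟫ := by
    rw [← smul_sub, real_inner_smul_right]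
  have hinner1 : ⟪γ, z₁ - z₂⟫ = ⟪γ, z₁⟫ - ⟪γ, z₂⟫ := inner_sub_right γ z₁ z₂
  have key : fbar y₁ z₁ - fbar y₂ z₂ =
      e * (f u₁ v₁ - f u₂ v₂ - α * (u₁ - u₂) - ⟪γ, v₁ - v₂⟫) := by
    rw [hfbar, hfbar, hinner]
    simp only [u₁, u₂]
    rw [hinner1]
    linear_combination (α * (y₁ - y₂) + ⟪γ, z₁⟫ - ⟪γ, z₂⟫) * h1
  have n1 : ‖v₁ - v₂‖ = b * ‖z₁ - z₂‖ := by
    rw [← smul_sub, norm_smul, Real.norm_eq_abs, abs_of_pos hbpos]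
  have n2 : ‖v₁‖ = b * ‖z₁‖ := by rw [norm_smul, Real.norm_eq_abs, abs_of_pos hbpos]
  have n3 : ‖v₂‖ = b * ‖z₂‖ := by rw [norm_smul, Real.norm_eq_abs, abs_of_pos hbpos]
  have m1 : |u₁ - u₂| = b * |y₁ - y₂| := by
    rw [show u₁ - u₂ = b * (y₁ - y₂) by ring, abs_mul, abs_of_pos hbpos]
  have m2 : |u₁| = b * |y₁| := by rw [abs_mul, abs_of_pos hbpos]
  have m3 : |u₂| = b * |y₂| := by rw [abs_mul, abs_of_pos hbpos]
  have h2 := hf u₁ u₂ v₁ v₂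
  rw [n1, n2, n3, m1, m2, m3] at h2
  have hble : b ≤ Real.exp L := by
    rw [hb]
    exact Real.exp_le_exp.2 (le_trans (neg_le_abs a) ha)
  have hL1 : (1:ℝ) ≤ Real.exp L := Real.one_le_exp hL
  have hA : 0 ≤ r * |y₁ - y₂| + θ * ‖z₁ - z₂‖ := by positivity
  have hB : 0 ≤ r * (|y₁| + |y₂|) + θ * (‖z₁‖ + ‖z₂‖) := by positivity
  calc |fbar y₁ z₁ - fbar y₂ z₂|
      = e * |f u₁ v₁ - f u₂ v₂ - α * (u₁ - u₂) - ⟪γ, v₁ - v₂⟫| := by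
        rw [key, abs_mul, abs_of_pos hepos]
    _ ≤ e * ((r * (b * |y₁ - y₂|) + θ * (b * ‖z₁ - z₂‖)) *
          (r * (b * |y₁| + b * |y₂|) + θ * (b * ‖z₁‖ + b * ‖z₂‖))) :=
        mul_le_mul_of_nonneg_left h2 hepos.le
    _ = (e * b) * b * ((r * |y₁ - y₂| + θ * ‖z₁ - z₂‖) *
          (r * (|y₁| + |y₂|) + θ * (‖z₁‖ + ‖z₂‖))) := by ring
    _ ≤ (Real.exp L * Real.exp L) * ((r * |y₁ - y₂| + θ * ‖z₁ - z₂‖) *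
          (r * (|y₁| + |y₂|) + θ * (‖z₁‖ + ‖z₂‖))) := by
        rw [h1, one_mul]
        have : b ≤ Real.exp L * Real.exp L := le_trans hble (by nlinarith)
        exact mul_le_mul_of_nonneg_right this (by positivity)
    _ = ((r * Real.exp L) * |y₁ - y₂| + (θ * Real.exp L) * ‖z₁ - z₂‖) *
          ((r * Real.exp L) * (|y₁| + |y₂|) + (θ * Real.exp L) * (‖z₁‖ + ‖z₂‖)) := by
        ring
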